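/- arXiv:math/0105170 — 3 statements merged into one kernel-verified Lean document; each statement's English description precedes it below -/
import Mathlib

section
/- Let q be a transcendental element over ℚ (work in the field ℚ(q)). Define elements b_n of ℚ(q) for n ∈ ℤ by b_{2i} = (1-q+q²)⁻¹ · (1-q) · ((-q)^{-i} - q^{2i}(q+q^{-1})) and b_{2i+1} = (1-q+q²)⁻¹ · ((-q)^{-i} + q^{2i+1}(q-1)) for i ∈ ℤ. Then for all n ∈ ℤ, b_{-n} = -q^{-1} · σ(b_n), where σ is the ℚ-algebra automorphism of ℚ(q) sending q to q^{-1}. -/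
local notation "q" => (RatFunc.X : RatFunc ℚ)

theorem stmt0 (b : ℤ → RatFunc ℚ)
    (hbe : ∀ i : ℤ, b (2 * i) =
      (1 - q + q ^ 2)⁻¹ * (1 - q) * ((-q) ^ (-i) - q ^ (2 * i) * (q + q⁻¹)))
    (hbo : ∀ i : ℤ, b (2 * i + 1) =
      (1 - q + q ^ 2)⁻¹ * ((-q) ^ (-i) + q ^ (2 * i + 1) * (q - 1)))
    (σ : RatFunc ℚ ≃ₐ[ℚ] RatFunc ℚ) (hσ : σ q = q⁻¹) :
    ∀ n : ℤ, b (-n) = -q⁻¹ * σ (b n) := by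
  have hq : (q : RatFunc ℚ) ≠ 0 := RatFunc.X_ne_zero
  have hnq : (-q : RatFunc ℚ) ≠ 0 := neg_ne_zero.mpr hq
  have h1 : (1 : RatFunc ℚ) - q + q^2 ≠ 0 := by
    rw [show (1 : RatFunc ℚ) - q + q^2 =
        algebraMap (Polynomial ℚ) _ (1 - Polynomial.X + Polynomial.X^2) by
      simp [map_add, map_sub, map_pow, RatFunc.algebraMap_X]]
    apply RatFunc.algebraMap_ne_zero
    intro h
    have := congrArg (fun p => Polynomial.coeff p 0) h
    simp at this
  have e : (1 : RatFunc ℚ) - q⁻¹ + q⁻¹^2 = (q^2)⁻¹ * (1 - q + q^2) := by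
    field_simp; ring
  intro n
  rcases Int.even_or_odd' n with ⟨k, hk | hk⟩
  · subst hk
    rw [show -(2*k) = 2*(-k) from by ring, hbe, hbe]
    simp only [map_mul, map_sub, map_add, map_inv₀, map_one, map_pow, map_zpow₀,
      map_neg, hσ, inv_inv, neg_neg]
    rw [← inv_neg, inv_zpow', inv_zpow', neg_neg, show (2:ℤ)*(-k) = -(2*k) from by ring,
      zpow_neg, e, mul_inv, inv_inv]
    have hu : (-q : RatFunc ℚ)^k ≠ 0 := zpow_ne_zero k hnq
    have hv : (q : RatFunc ℚ)^(2*k) ≠ 0 := zpow_ne_zero _ hq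
    generalize (-q : RatFunc ℚ)^k = u at hu ⊢
    generalize (q : RatFunc ℚ)^(2*k) = v at hv ⊢
    field_simp
    ring
  · subst hk
    rw [show -(2*k+1) = 2*(-k-1)+1 from by ring, hbo, hbo]
    simp only [map_mul, map_sub, map_add, map_inv₀, map_one, map_pow, map_zpow₀,
      map_neg, hσ, inv_inv, neg_neg]
    rw [← inv_neg, inv_zpow', inv_zpow', neg_neg,
      show -(-k-1) = k+1 from by ring,
      show (2:ℤ)*(-k-1)+1 = -(2*k+1) from by ring,
      zpow_neg, zpow_add_one₀ hnq, e, mul_inv, inv_inv]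
    have hu : (-q : RatFunc ℚ)^k ≠ 0 := zpow_ne_zero k hnq
    have hv : (q : RatFunc ℚ)^(2*k+1) ≠ 0 := zpow_ne_zero _ hq
    generalize (-q : RatFunc ℚ)^k = u at hu ⊢
    generalize (q : RatFunc ℚ)^(2*k+1) = v at hv ⊢
    field_simp
    ring
end

section
/- With b_n ∈ ℚ(q) as defined, for all s ∈ ℤ and all integers l ≥ 1 one has q·b_{2s} + (1+q)·∑_{i=1}^{l-1} b_{2i}·b_{2(i+s)} + (q+q^{-1})(q−1)·b_{2l−1}·b_{2(l+s)−1} = b_{2(2l+s−1)} (the middle sum being empty when l = 1). -/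
local notation "q" => (RatFunc.X : RatFunc ℚ)

set_option maxHeartbeats 1600000 in
theorem stmt8 (b : ℤ → RatFunc ℚ)
    (hbe : ∀ i : ℤ, b (2 * i) =
      (1 - q + q ^ 2)⁻¹ * (1 - q) * ((-q) ^ (-i) - q ^ (2 * i) * (q + q⁻¹)))
    (hbo : ∀ i : ℤ, b (2 * i + 1) =
      (1 - q + q ^ 2)⁻¹ * ((-q) ^ (-i) + q ^ (2 * i + 1) * (q - 1))) :
    ∀ s l : ℤ, 1 ≤ l →
      q * b (2 * s) + (1 + q) * (∑ i ∈ Finset.Icc (1 : ℤ) (l - 1), b (2 * i) * b (2 * (i + s)))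
        + (q + q⁻¹) * (q - 1) * b (2 * l - 1) * b (2 * (l + s) - 1) = b (2 * (2 * l + s - 1)) := by
  have hq : (q : RatFunc ℚ) ≠ 0 := RatFunc.X_ne_zero
  have hnq : (-q : RatFunc ℚ) ≠ 0 := neg_ne_zero.mpr hq
  have hc : (1 - q + q ^ 2 : RatFunc ℚ) ≠ 0 := by
    have h1 : (1 - Polynomial.X + Polynomial.X ^ 2 : Polynomial ℚ) ≠ 0 := by
      intro h
      have h2 := congrArg (fun p => Polynomial.coeff p 2) h
      simp [Polynomial.coeff_one, Polynomial.coeff_X] at h2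
    simpa [map_sub, map_add, map_pow, map_one, RatFunc.algebraMap_X] using
      (RatFunc.algebraMap_ne_zero h1)
  have E2 : ∀ n : ℤ, (-q) ^ (2 * n) = ((-q) ^ n) ^ 2 := fun n => by
    rw [two_mul, zpow_add₀ hnq, sq]
  have E1 : ∀ n : ℤ, q ^ (2 * n) = ((-q) ^ n) ^ 2 := fun n =>
    ((even_two_mul n).neg_zpow q).symm.trans (E2 n)
  intro s l hl
  refine Int.le_induction (motive := fun l _ => q * b (2 * s)
      + (1 + q) * (∑ i ∈ Finset.Icc (1 : ℤ) (l - 1), b (2 * i) * b (2 * (i + s)))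
      + (q + q⁻¹) * (q - 1) * b (2 * l - 1) * b (2 * (l + s) - 1)
      = b (2 * (2 * l + s - 1))) ?_ ?_ l hl
  ·   beta_reduce
      have hb1 : b (2 * 1 - 1) = 1 := by
        rw [show (2 * 1 - 1 : ℤ) = 2 * 0 + 1 by norm_num, hbo]
        norm_num
        field_simp
        ring
      rw [show ((1 : ℤ) - 1) = 0 from rfl,
        show Finset.Icc (1 : ℤ) 0 = ∅ from Finset.Icc_eq_empty (by norm_num),
        Finset.sum_empty, hb1,
        show (2 * (1 + s) - 1 : ℤ) = 2 * s + 1 by ring,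
        show (2 * (2 * 1 + s - 1) : ℤ) = 2 * (s + 1) by ring]
      rw [hbe s, hbo s, hbe (s + 1)]
      simp only [zpow_neg, zpow_add₀ hq, zpow_add₀ hnq, zpow_sub₀ hnq, E1, E2, zpow_one]
      have hP : ((-q : RatFunc ℚ) ^ s) ≠ 0 := zpow_ne_zero _ hnq
      set P := ((-q : RatFunc ℚ) ^ s) with hPdef
      clear_value P
      set C := (1 - q + q ^ 2 : RatFunc ℚ) with hCrel
      clear_value C
      simp only [div_neg, mul_neg, neg_mul, inv_neg, neg_sq, neg_neg]
      field_simp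
      rw [hCrel]
      ring
  ·   intro l hl ih
      beta_reduce
      beta_reduce at ih
      have IH := ih
      rw [show (2 * l - 1 : ℤ) = 2 * (l - 1) + 1 by ring,
        show (2 * (l + s) - 1 : ℤ) = 2 * (l + s - 1) + 1 by ring] at IH
      have key : (1 + q) * (b (2 * l) * b (2 * (l + s)))
          + (q + q⁻¹) * (q - 1) * b (2 * l + 1) * b (2 * (l + s) + 1)
          - (q + q⁻¹) * (q - 1) * b (2 * (l - 1) + 1) * b (2 * (l + s - 1) + 1)
          = b (2 * (2 * l + s + 1)) - b (2 * (2 * l + s - 1)) := by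
        rw [hbe l, hbe (l + s), hbo l, hbo (l + s), hbo (l - 1), hbo (l + s - 1),
          hbe (2 * l + s + 1), hbe (2 * l + s - 1)]
        simp only [zpow_neg, zpow_add₀ hq, zpow_add₀ hnq, zpow_sub₀ hnq, E1, E2, zpow_one]
        have hP : ((-q : RatFunc ℚ) ^ s) ≠ 0 := zpow_ne_zero _ hnq
        have hA : ((-q : RatFunc ℚ) ^ l) ≠ 0 := zpow_ne_zero _ hnq
        set P := ((-q : RatFunc ℚ) ^ s) with hPdef
        set A := ((-q : RatFunc ℚ) ^ l) with hAdef
        clear_value P A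
        set C := (1 - q + q ^ 2 : RatFunc ℚ) with hCrel
        clear_value C
        clear hbe hbo E1 E2 hPdef hAdef ih
        simp only [div_neg, mul_neg, neg_mul, inv_neg, neg_sq, neg_neg]
        field_simp
        rw [hCrel]
        ring
      rw [show (l + 1 - 1 : ℤ) = l by ring,
        show Finset.Icc (1 : ℤ) l = insert l (Finset.Icc 1 (l - 1)) by
          ext x; simp only [Finset.mem_Icc, Finset.mem_insert]; omega,
        Finset.sum_insert (by simp only [Finset.mem_Icc]; omega),
        show (2 * (l + 1) - 1 : ℤ) = 2 * l + 1 by ring,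
        show (2 * ((l + 1) + s) - 1 : ℤ) = 2 * (l + s) + 1 by ring,
        show (2 * (2 * (l + 1) + s - 1) : ℤ) = 2 * (2 * l + s + 1) by ring]
      linear_combination IH + key
end

section
/- In the formal power series ring ℚ(q)[[u]], with b_n ∈ ℚ(q) defined by the standard parity-dependent formulas, one has ∑_{i≥1} b_{2i−1}·q^i·u^i = q·u·(1−q·u) / ((1+u)(1−q³u)). -/
local notation "q" => (RatFunc.X : RatFunc ℚ)

open PowerSeries in
theorem stmt12 (b : ℤ → RatFunc ℚ)
    (hbe : ∀ i : ℤ, b (2 * i) =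
      (1 - q + q ^ 2)⁻¹ * (1 - q) * ((-q) ^ (-i) - q ^ (2 * i) * (q + q⁻¹)))
    (hbo : ∀ i : ℤ, b (2 * i + 1) =
      (1 - q + q ^ 2)⁻¹ * ((-q) ^ (-i) + q ^ (2 * i + 1) * (q - 1))) :
    (PowerSeries.mk fun i : ℕ => if i = 0 then 0 else b (2 * (i : ℤ) - 1) * q ^ i)
      = PowerSeries.C (R := RatFunc ℚ) q * PowerSeries.X
          * (1 - PowerSeries.C (R := RatFunc ℚ) q * PowerSeries.X)
          * ((1 + PowerSeries.X)
              * (1 - PowerSeries.C (R := RatFunc ℚ) (q ^ 3) * PowerSeries.X))⁻¹ := by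
  have hq : (RatFunc.X : RatFunc ℚ) ≠ 0 := RatFunc.X_ne_zero
  have hnq : (-(RatFunc.X : RatFunc ℚ)) ≠ 0 := neg_ne_zero.2 hq
  have hd : (1 - q + q ^ 2 : RatFunc ℚ) ≠ 0 := by
    have h1 : (1 - q + q ^ 2 : RatFunc ℚ)
        = algebraMap (Polynomial ℚ) _ (1 - Polynomial.X + Polynomial.X ^ 2) := by
      simp [← RatFunc.algebraMap_X, map_add, map_sub, map_pow, map_one]
    rw [h1]
    apply RatFunc.algebraMap_ne_zero
    intro h
    have := congrArg (fun p => Polynomial.coeff p 0) h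
    simp at this
  have hb : ∀ n : ℕ, b (2 * ((n : ℤ) + 1) - 1)
      = (1 - q + q ^ 2)⁻¹ * (((-q) ^ n)⁻¹ + q ^ (2 * n + 1) * (q - 1)) := by
    intro n
    have h2 : (2 * ((n : ℤ) + 1) - 1) = 2 * (n : ℤ) + 1 := by ring
    rw [h2, hbo, zpow_neg, zpow_natCast,
      show ((2 * (n : ℤ) + 1)) = ((2 * n + 1 : ℕ) : ℤ) by push_cast; ring, zpow_natCast]
  rw [PowerSeries.eq_mul_inv_iff_mul_eq (by simp)]
  set f : ℕ → RatFunc ℚ := fun i => if i = 0 then 0 else b (2 * (i : ℤ) - 1) * q ^ i with hf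
  have hbn : ∀ n : ℕ, f (n + 1)
      = (1 - q + q ^ 2)⁻¹ * (((-q) ^ n)⁻¹ + q ^ (2 * n + 1) * (q - 1)) * q ^ (n + 1) := by
    intro n
    have h3 := hb n
    push_cast at h3
    simp only [hf, Nat.succ_ne_zero, if_false]
    push_cast
    rw [show (2 * ((n : ℤ) + 1) - 1) = 2 * (n : ℤ) + 1 by ring] at h3 ⊢
    rw [h3]
  have hf0 : f 0 = 0 := by simp [hf]
  obtain ⟨a1, ha1⟩ : ∃ a1 : RatFunc ℚ, a1 = 1 - q ^ 3 := ⟨_, rfl⟩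
  obtain ⟨a2, ha2⟩ : ∃ a2 : RatFunc ℚ, a2 = q ^ 3 := ⟨_, rfl⟩
  obtain ⟨a3, ha3⟩ : ∃ a3 : RatFunc ℚ, a3 = q ^ 2 := ⟨_, rfl⟩
  have hL : (mk f * ((1 + X) * (1 - C (R := RatFunc ℚ) (q ^ 3) * X)) : (RatFunc ℚ)⟦X⟧)
      = mk f + (mk f * C (R := RatFunc ℚ) a1) * X ^ 1
          - (mk f * C (R := RatFunc ℚ) a2) * X ^ 2 := by
    rw [ha1, ha2]
    simp only [map_sub, map_one, map_pow]
    ring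
  have hR : (C (R := RatFunc ℚ) q * X * (1 - C (R := RatFunc ℚ) q * X) : (RatFunc ℚ)⟦X⟧)
      = C (R := RatFunc ℚ) q * X ^ 1 - C (R := RatFunc ℚ) a3 * X ^ 2 := by
    rw [ha3]
    simp only [map_pow]
    ring
  rw [hL, hR]
  ext n
  simp only [map_sub, map_add, coeff_mul_X_pow', coeff_mul_C, coeff_mk, coeff_C_mul_X_pow]
  match n with
  | 0 => norm_num [hf]
  | 1 =>
    norm_num [show (1:ℕ) ≠ 0 from one_ne_zero, hbn 0, hf0]
    field_simp
    ring
  | 2 =>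
    norm_num [show (2:ℕ) - 1 = 0 + 1 from rfl, hbn 1, hbn 0, ha1, ha3, hf0]
    field_simp
    ring
  | (m + 3) =>
    norm_num [show m + 3 = (m + 2) + 1 from rfl, show m + 2 + 1 - 1 = (m + 1) + 1 from rfl,
      show m + 2 + 1 - 2 = m + 1 from rfl, hbn (m + 2), hbn (m + 1), hbn m, ha1, ha2]
    have hpm : ((-q : RatFunc ℚ)) ^ m ≠ 0 := pow_ne_zero _ hnq
    have e2 : ((-q : RatFunc ℚ) ^ (m + 1))⁻¹ = ((-q) ^ m)⁻¹ * (-q)⁻¹ := by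
      rw [pow_succ, mul_inv]
    have e3 : ((-q : RatFunc ℚ) ^ (m + 2))⁻¹ = ((-q) ^ m)⁻¹ * ((-q)⁻¹ * (-q)⁻¹) := by
      rw [show m + 2 = m + 1 + 1 from rfl, pow_succ, pow_succ, mul_inv, mul_inv]
      ring
    rw [e2, e3]
    generalize ((-q : RatFunc ℚ) ^ m)⁻¹ = t
    rw [inv_neg]
    field_simp
    ring
end
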